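/- Let τ_E denote the Euclidean topology on the real line ℝ. There exist subsets M_1, M_2 ⊆ ℝ (for example, the complements of two disjoint countable dense subsets of ℝ) such that τ_E = τ_E(M_1) ∩ τ_E(M_2) and, for i = 1, 2, the space (ℝ, τ_E(M_i)) is separable, metrizable, and satisfies dim (ℝ, τ_E(M_i)) ≤ 0. -/
import Mathlib


/-- The Bing–Hanner extension `τ(M)` of a topology `τ` on `X` determined by a subset `M ⊆ X`:
its open sets are exactly the sets of the form `U ∪ K` with `U` a `τ`-open set and
`K ⊆ X \ M`. -/
def bingHanner {X : Type*} (τ : TopologicalSpace X) (M : Set X) : TopologicalSpace X where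
  IsOpen O := ∃ U K : Set X, τ.IsOpen U ∧ K ⊆ Mᶜ ∧ O = U ∪ K
  isOpen_univ := ⟨Set.univ, ∅, τ.isOpen_univ, by simp, by simp⟩
  isOpen_inter := by
    rintro s t ⟨U₁, K₁, hU₁, hK₁, rfl⟩ ⟨U₂, K₂, hU₂, hK₂, rfl⟩
    refine ⟨U₁ ∩ U₂, ((U₁ ∪ K₁) ∩ (U₂ ∪ K₂)) \ (U₁ ∩ U₂),
      τ.isOpen_inter _ _ hU₁ hU₂, ?_, ?_⟩
    · rintro x ⟨⟨h1, h2⟩, hn⟩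
      rcases h1 with h1 | h1
      · rcases h2 with h2 | h2
        · exact absurd ⟨h1, h2⟩ hn
        · exact hK₂ h2
      · exact hK₁ h1
    · have hsub : U₁ ∩ U₂ ⊆ (U₁ ∪ K₁) ∩ (U₂ ∪ K₂) :=
        fun x hx => ⟨Or.inl hx.1, Or.inl hx.2⟩
      exact (Set.union_diff_cancel hsub).symm
  isOpen_sUnion := by
    intro S hS
    choose U K hU hK hEq using hS
    refine ⟨⋃ s, ⋃ h : s ∈ S, U s h, ⋃ s, ⋃ h : s ∈ S, K s h, ?_, ?_, ?_⟩
    · letI := τ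
      exact isOpen_iUnion fun s => isOpen_iUnion fun h => hU s h
    · exact Set.iUnion_subset fun s => Set.iUnion_subset fun h => hK s h
    · ext x
      simp only [Set.mem_sUnion, Set.mem_union, Set.mem_iUnion]
      constructor
      · rintro ⟨s, hs, hx⟩
        rw [hEq s hs] at hx
        rcases hx with hx | hx
        · exact Or.inl ⟨s, hs, hx⟩
        · exact Or.inr ⟨s, hs, hx⟩
      · rintro (⟨s, hs, hx⟩ | ⟨s, hs, hx⟩)
        · exact ⟨s, hs, by rw [hEq s hs]; exact Or.inl hx⟩
        · exact ⟨s, hs, by rw [hEq s hs]; exact Or.inr hx⟩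

/-- `covDimLE t n` : the covering dimension of `(X, t)` is at most `n`, i.e. every finite
open cover admits a finite open refinement covering `X` in which any `n + 2` pairwise
distinct members have empty intersection. -/
def covDimLE {X : Type*} (t : TopologicalSpace X) (n : ℕ) : Prop :=
  ∀ C : Set (Set X), C.Finite → (∀ U ∈ C, t.IsOpen U) → ⋃₀ C = Set.univ →
    ∃ V : Set (Set X), V.Finite ∧ (∀ U ∈ V, t.IsOpen U) ∧ ⋃₀ V = Set.univ ∧
      (∀ U ∈ V, ∃ W ∈ C, U ⊆ W) ∧
      ∀ F : Finset (Set X), ↑F ⊆ V → F.card = n + 2 → ⋂₀ (F : Set (Set X)) = ∅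

/-- `IndLE0 t` : the large inductive dimension of `(Z, t)` is at most `0`, i.e. any two
disjoint closed sets are separated by a clopen set. -/
def IndLE0 {Z : Type*} (t : TopologicalSpace Z) : Prop :=
  ∀ A B : Set Z, @IsClosed Z t A → @IsClosed Z t B → Disjoint A B →
    ∃ U : Set Z, t.IsOpen U ∧ @IsClosed Z t U ∧ A ⊆ U ∧ U ∩ B = ∅

/-- `indLE0 t` : the small inductive dimension of `(Z, t)` is at most `0`, i.e. every point
has a neighborhood basis of clopen sets. -/
def indLE0 {Z : Type*} (t : TopologicalSpace Z) : Prop :=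
  ∀ (x : Z) (O : Set Z), t.IsOpen O → x ∈ O →
    ∃ U : Set Z, t.IsOpen U ∧ @IsClosed Z t U ∧ x ∈ U ∧ U ⊆ O

/-- `L` is a partition between `A` and `B` in `(X, t)`. -/
def isPartitionBetween {X : Type*} (t : TopologicalSpace X) (A B L : Set X) : Prop :=
  ∃ U V : Set X, t.IsOpen U ∧ t.IsOpen V ∧ Disjoint U V ∧ A ⊆ U ∧ B ⊆ V ∧ L = (U ∪ V)ᶜ

section BingHannerAux

open Set TopologicalSpace

local notation "τE" => (inferInstance : TopologicalSpace ℝ)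

lemma bh_isOpen_of_isOpen (M : Set ℝ) {U : Set ℝ} (h : IsOpen U) :
    (bingHanner τE M).IsOpen U :=
  ⟨U, ∅, h, by simp, by simp⟩

lemma bh_isOpen_of_subset (M : Set ℝ) {K : Set ℝ} (h : K ⊆ Mᶜ) :
    (bingHanner τE M).IsOpen K :=
  ⟨∅, K, isOpen_empty, h, by simp⟩

/-- A countable family of clopen basic sets for the Bing–Hanner extension. -/
def bhBasis (M : Set ℝ) : Set (Set ℝ) :=
  ((fun p : ℝ × ℝ => Set.Ioo p.1 p.2) '' (Mᶜ ×ˢ Mᶜ)) ∪ ((fun d : ℝ => ({d} : Set ℝ)) '' Mᶜ)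

lemma bhBasis_countable {M : Set ℝ} (hc : Mᶜ.Countable) : (bhBasis M).Countable :=
  ((hc.prod hc).image _).union (hc.image _)

lemma bhBasis_isOpen (M : Set ℝ) : ∀ s ∈ bhBasis M, (bingHanner τE M).IsOpen s := by
  rintro s (⟨⟨a, b⟩, _, rfl⟩ | ⟨d, hd, rfl⟩)
  · exact bh_isOpen_of_isOpen M isOpen_Ioo
  · exact bh_isOpen_of_subset M (Set.singleton_subset_iff.mpr hd)

lemma bh_exists_clopen {M : Set ℝ} (hd : Dense Mᶜ) (x : ℝ) (O : Set ℝ)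
    (hO : (bingHanner τE M).IsOpen O) (hx : x ∈ O) :
    ∃ s ∈ bhBasis M, (bingHanner τE M).IsOpen s ∧ @IsClosed ℝ (bingHanner τE M) s ∧
      x ∈ s ∧ s ⊆ O := by
  obtain ⟨U, K, hU, hK, rfl⟩ := hO
  replace hU : IsOpen U := hU
  rcases hx with hxU | hxK
  · rw [Metric.isOpen_iff] at hU
    obtain ⟨ε, hε, hball⟩ := hU x hxU
    obtain ⟨a, ha, hax1, hax2⟩ := dense_iff_exists_between.mp hd (x - ε) x (by linarith)
    obtain ⟨b, hb, hbx1, hbx2⟩ := dense_iff_exists_between.mp hd x (x + ε) (by linarith)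
    refine ⟨Set.Ioo a b, Or.inl ⟨(a, b), ⟨ha, hb⟩, rfl⟩,
      bh_isOpen_of_isOpen M isOpen_Ioo, ?_, ⟨hax2, hbx1⟩, ?_⟩
    · refine @IsClosed.mk ℝ (bingHanner τE M) _ ?_
      refine ⟨Set.Iio a ∪ Set.Ioi b, {a, b}, IsOpen.union isOpen_Iio isOpen_Ioi, ?_, ?_⟩
      · rintro y (rfl | rfl)
        · exact ha
        · exact hb
      · ext y
        simp only [Set.mem_compl_iff, Set.mem_Ioo, Set.mem_union, Set.mem_Iio, Set.mem_Ioi,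
          Set.mem_insert_iff, Set.mem_singleton_iff, not_and_or, not_lt]
        constructor
        · rintro (h | h)
          · rcases eq_or_lt_of_le h with h | h
            · exact Or.inr (Or.inl h)
            · exact Or.inl (Or.inl h)
          · rcases eq_or_lt_of_le h with h | h
            · exact Or.inr (Or.inr h.symm)
            · exact Or.inl (Or.inr h)
        · rintro ((h | h) | (rfl | rfl))
          · exact Or.inl h.le
          · exact Or.inr h.le
          · exact Or.inl le_rfl
          · exact Or.inr le_rfl
    · intro y hy
      refine Or.inl (hball ?_)
      rw [Real.ball_eq_Ioo]
      exact ⟨by linarith [hy.1], by linarith [hy.2]⟩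
  · refine ⟨{x}, Or.inr ⟨x, hK hxK, rfl⟩,
      bh_isOpen_of_subset M (Set.singleton_subset_iff.mpr (hK hxK)), ?_, rfl, ?_⟩
    · exact @IsClosed.mk ℝ (bingHanner τE M) _ (bh_isOpen_of_isOpen M isOpen_compl_singleton)
    · exact Set.singleton_subset_iff.mpr (Or.inr hxK)

lemma bh_separable {M : Set ℝ} (hc : Mᶜ.Countable) (hd : Dense Mᶜ) :
    @TopologicalSpace.SeparableSpace ℝ (bingHanner τE M) := by
  have hdio : ∀ U : Set ℝ, IsOpen U → U.Nonempty → (U ∩ Mᶜ).Nonempty :=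
    fun U hU hne => hd.inter_open_nonempty U hU hne
  letI t : TopologicalSpace ℝ := bingHanner τE M
  refine @TopologicalSpace.SeparableSpace.mk ℝ t ⟨Mᶜ, hc, ?_⟩
  rw [dense_iff_inter_open]
  intro U hU hUne
  obtain ⟨U', K, hU', hK, rfl⟩ := hU
  obtain ⟨x, hx⟩ := hUne
  rcases hx with hx | hx
  · obtain ⟨y, hyU, hyD⟩ := hdio U' hU' ⟨x, hx⟩
    exact ⟨y, Or.inl hyU, hyD⟩
  · exact ⟨x, Or.inr hx, hK hx⟩

lemma bh_metrizable {M : Set ℝ} (hc : Mᶜ.Countable) (hd : Dense Mᶜ) :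
    @TopologicalSpace.MetrizableSpace ℝ (bingHanner τE M) := by
  have hclopen := fun x O => bh_exists_clopen (M := M) hd x O
  have hbcount := bhBasis_countable hc
  have hbopen := bhBasis_isOpen M
  have hsing : ∀ x : ℝ, (bingHanner τE M).IsOpen ({x}ᶜ) :=
    fun x => bh_isOpen_of_isOpen M isOpen_compl_singleton
  letI t : TopologicalSpace ℝ := bingHanner τE M
  haveI : SecondCountableTopology ℝ := by
    refine TopologicalSpace.IsTopologicalBasis.secondCountableTopology ?_ hbcount
    refine TopologicalSpace.isTopologicalBasis_of_isOpen_of_nhds hbopen ?_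
    intro a u ha hu
    obtain ⟨s, hs, _, _, has, hsub⟩ := hclopen a u hu ha
    exact ⟨s, hs, has, hsub⟩
  haveI : T1Space ℝ := ⟨fun x => @IsClosed.mk ℝ t _ (hsing x)⟩
  haveI : RegularSpace ℝ := by
    refine RegularSpace.of_exists_mem_nhds_isClosed_subset ?_
    intro x s hs
    obtain ⟨O, hOsub, hO, hxO⟩ := mem_nhds_iff.mp hs
    obtain ⟨c, _, hcO, hcC, hxc, hcsub⟩ := hclopen x O hO hxO
    have hcO' : IsOpen c := hcO
    exact ⟨c, hcO'.mem_nhds hxc, hcC, hcsub.trans hOsub⟩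
  infer_instance

lemma bh_covDim {M : Set ℝ} (hc : Mᶜ.Countable) (hd : Dense Mᶜ) :
    covDimLE (bingHanner τE M) 0 := by
  classical
  have hclopen := fun x O => bh_exists_clopen (M := M) hd x O
  intro C hCfin hCopen hCcov
  letI t : TopologicalSpace ℝ := bingHanner τE M
  set G : Set (Set ℝ) := {s | s ∈ bhBasis M ∧ IsOpen s ∧ IsClosed s ∧ ∃ O ∈ C, s ⊆ O} with hG
  have hGc : G.Countable := (bhBasis_countable hc).mono (fun s hs => hs.1)
  have hGcov : ∀ x : ℝ, ∃ s ∈ G, x ∈ s := by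
    intro x
    have hx : x ∈ ⋃₀ C := by rw [hCcov]; trivial
    obtain ⟨O, hOC, hxO⟩ := hx
    obtain ⟨s, hs, hsO, hsC, hxs, hsub⟩ := hclopen x O (hCopen O hOC) hxO
    exact ⟨s, ⟨hs, hsO, hsC, O, hOC, hsub⟩, hxs⟩
  have hGne : G.Nonempty := by
    obtain ⟨s, hs, _⟩ := hGcov 0
    exact ⟨s, hs⟩
  obtain ⟨f, hf⟩ := hGc.exists_eq_range hGne
  have hfG : ∀ n, f n ∈ G := fun n => hf ▸ Set.mem_range_self n
  set V' : ℕ → Set ℝ := fun n => f n \ ⋃ m ∈ Set.Iio n, f m with hV'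
  have hV'open : ∀ n, IsOpen (V' n) := fun n =>
    ((hfG n).2.1).sdiff ((Set.finite_Iio n).isClosed_biUnion fun m _ => (hfG m).2.2.1)
  have hV'sub : ∀ n, V' n ⊆ f n := fun n => Set.diff_subset
  have hV'disj : ∀ m n, m < n → ∀ x, x ∈ V' m → x ∈ V' n → False := by
    intro m n hmn x hxm hxn
    exact hxn.2 (Set.mem_biUnion hmn hxm.1)
  have hV'cov : ∀ x : ℝ, ∃ n, x ∈ V' n := by
    intro x
    obtain ⟨s, hsG, hxs⟩ := hGcov x
    rw [hf] at hsG
    obtain ⟨n, rfl⟩ := hsG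
    have hex : ∃ n, x ∈ f n := ⟨n, hxs⟩
    refine ⟨Nat.find hex, Nat.find_spec hex, ?_⟩
    intro hmem
    obtain ⟨m, hm, hxm⟩ := Set.mem_iUnion₂.mp hmem
    exact Nat.find_min hex hm hxm
  choose W hWC hWs using fun n => (hfG n).2.2.2
  refine ⟨(fun O => ⋃ n, ⋃ _ : W n = O, V' n) '' C, hCfin.image _, ?_, ?_, ?_, ?_⟩
  · rintro U ⟨O, _, rfl⟩
    exact isOpen_iUnion fun n => isOpen_iUnion fun _ => hV'open n
  · rw [Set.eq_univ_iff_forall]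
    intro x
    obtain ⟨n, hxn⟩ := hV'cov x
    exact ⟨_, ⟨W n, hWC n, rfl⟩, Set.mem_iUnion.mpr ⟨n, Set.mem_iUnion.mpr ⟨rfl, hxn⟩⟩⟩
  · rintro U ⟨O, hO, rfl⟩
    refine ⟨O, hO, Set.iUnion_subset fun n => Set.iUnion_subset fun hn => ?_⟩
    exact (hV'sub n).trans (hn ▸ hWs n)
  · intro F hFV hFcard
    have h2 : F.card = 2 := hFcard
    obtain ⟨A, B, hAB, rfl⟩ := Finset.card_eq_two.mp h2
    have hA := hFV (show A ∈ (({A, B} : Finset (Set ℝ)) : Set (Set ℝ)) by simp)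
    have hB' := hFV (show B ∈ (({A, B} : Finset (Set ℝ)) : Set (Set ℝ)) by simp)
    obtain ⟨O₁, _, hO₁⟩ := hA
    obtain ⟨O₂, _, hO₂⟩ := hB'
    rw [Set.eq_empty_iff_forall_notMem]
    rintro x hx
    rw [show ((({A, B} : Finset (Set ℝ)) : Set (Set ℝ))) = {A, B} by simp] at hx
    rw [Set.sInter_insert, Set.sInter_singleton] at hx
    obtain ⟨hxA, hxB⟩ := hx
    rw [← hO₁] at hxA
    rw [← hO₂] at hxB
    obtain ⟨n, hn⟩ := Set.mem_iUnion.mp hxA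
    obtain ⟨hWn, hxn⟩ := Set.mem_iUnion.mp hn
    obtain ⟨m, hm⟩ := Set.mem_iUnion.mp hxB
    obtain ⟨hWm, hxm⟩ := Set.mem_iUnion.mp hm
    rcases lt_trichotomy n m with h | h | h
    · exact hV'disj n m h x hxn hxm
    · subst h
      apply hAB
      rw [← hO₁, ← hO₂, ← hWn, ← hWm]
    · exact hV'disj m n h x hxm hxn

end BingHannerAux
/-- There exist `M₁, M₂ ⊆ ℝ` such that the Euclidean topology is the
intersection of `τ_E(M₁)` and `τ_E(M₂)`, and both `(ℝ, τ_E(M_i))` are separable,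
metrizable, of covering dimension at most `0`. -/
theorem real_line_two_zeroDim_extensions :
    ∃ M₁ M₂ : Set ℝ,
      (∀ O : Set ℝ, IsOpen O ↔
        ((bingHanner (inferInstance : TopologicalSpace ℝ) M₁).IsOpen O ∧
         (bingHanner (inferInstance : TopologicalSpace ℝ) M₂).IsOpen O)) ∧
      (@TopologicalSpace.SeparableSpace ℝ (bingHanner (inferInstance : TopologicalSpace ℝ) M₁) ∧
        @TopologicalSpace.MetrizableSpace ℝ (bingHanner (inferInstance : TopologicalSpace ℝ) M₁) ∧
        covDimLE (bingHanner (inferInstance : TopologicalSpace ℝ) M₁) 0) ∧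
      (@TopologicalSpace.SeparableSpace ℝ (bingHanner (inferInstance : TopologicalSpace ℝ) M₂) ∧
        @TopologicalSpace.MetrizableSpace ℝ (bingHanner (inferInstance : TopologicalSpace ℝ) M₂) ∧
        covDimLE (bingHanner (inferInstance : TopologicalSpace ℝ) M₂) 0) := by
  classical
  set D₁ : Set ℝ := Set.range ((↑) : ℚ → ℝ) with hD₁
  set D₂ : Set ℝ := Set.range (fun q : ℚ => (q : ℝ) + Real.sqrt 2) with hD₂
  refine ⟨D₁ᶜ, D₂ᶜ, ?_, ?_, ?_⟩
  · -- intersection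
    have hdisj : ∀ x : ℝ, x ∈ D₁ → x ∈ D₂ → False := by
      rintro x ⟨q, rfl⟩ ⟨p, hp⟩
      have hp' : (p : ℝ) + Real.sqrt 2 = (q : ℝ) := hp
      exact irrational_sqrt_two ⟨q - p, by push_cast; linarith⟩
    intro O
    constructor
    · intro h
      exact ⟨bh_isOpen_of_isOpen _ h, bh_isOpen_of_isOpen _ h⟩
    · rintro ⟨⟨U₁, K₁, hU₁, hK₁, hO₁⟩, ⟨U₂, K₂, hU₂, hK₂, hO₂⟩⟩
      rw [compl_compl] at hK₁ hK₂
      have hOU : O = U₁ ∪ U₂ := by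
        apply Set.Subset.antisymm
        · intro x hx
          have hx₁ : x ∈ U₁ ∪ K₁ := hO₁ ▸ hx
          have hx₂ : x ∈ U₂ ∪ K₂ := hO₂ ▸ hx
          rcases hx₁ with h₁ | h₁
          · exact Or.inl h₁
          · rcases hx₂ with h₂ | h₂
            · exact Or.inr h₂
            · exact absurd (hdisj x (hK₁ h₁) (hK₂ h₂)) not_false
        · intro x hx
          rcases hx with h | h
          · exact hO₁ ▸ Or.inl h
          · exact hO₂ ▸ Or.inl h
      rw [hOU]
      have h1 : IsOpen U₁ := hU₁
      have h2 : IsOpen U₂ := hU₂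
      exact h1.union h2
  · -- properties for M₁
    have hc : (D₁ᶜ)ᶜ.Countable := by rw [compl_compl]; exact Set.countable_range _
    have hd : Dense ((D₁ᶜ)ᶜ) := by rw [compl_compl]; exact Rat.denseRange_cast
    exact ⟨bh_separable hc hd, bh_metrizable hc hd, bh_covDim hc hd⟩
  · -- properties for M₂
    have hc : (D₂ᶜ)ᶜ.Countable := by rw [compl_compl]; exact Set.countable_range _
    have hd : Dense ((D₂ᶜ)ᶜ) := by
      rw [compl_compl]
      rw [dense_iff_exists_between]
      intro a b hab
      obtain ⟨q, hq1, hq2⟩ := exists_rat_btwn (show a - Real.sqrt 2 < b - Real.sqrt 2 by linarith)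
      exact ⟨(q : ℝ) + Real.sqrt 2, ⟨q, rfl⟩, by linarith, by linarith⟩
    exact ⟨bh_separable hc hd, bh_metrizable hc hd, bh_covDim hc hd⟩
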